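/- Let G = A ⋊ B be the semidirect product of the additive group A of rational numbers by the multiplicative group B of positive rational numbers acting by multiplication. Then every proper non-trivial subgroup of A fails to be commensurable with any normal subgroup of G, yet every subnormal subgroup of G of infinite rank is normal (indeed every subnormal subgroup not contained in A is normal). -/

import Mathlib

/-- A subgroup is subnormal if it is joined to the whole group by a finite
chain of successive normal subgroups. -/
def IsSubnormal {G : Type*} [Group G] (H : Subgroup G) : Prop :=
  ∃ n : ℕ, ∃ c : ℕ → Subgroup G, c 0 = H ∧ c n = ⊤ ∧
    ∀ i < n, c i ≤ c (i + 1) ∧ ((c i).subgroupOf (c (i + 1))).Normal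

/-- A group has finite rank if there is `r` such that every finitely generated
subgroup can be generated by at most `r` elements. -/
def HasFiniteRank (G : Type*) [Group G] : Prop :=
  ∃ r : ℕ, ∀ H : Subgroup G, H.FG →
    ∃ S : Finset G, S.card ≤ r ∧ Subgroup.closure (S : Set G) = H

/-- A subgroup is a cn-subgroup if it is commensurable with some normal subgroup. -/
def IsCN {G : Type*} [Group G] (H : Subgroup G) : Prop :=
  ∃ N : Subgroup G, N.Normal ∧ Subgroup.Commensurable H N

/-- A subgroup is a cf-subgroup if its normal core has finite index in it. -/
def IsCF {G : Type*} [Group G] (H : Subgroup G) : Prop :=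
  H.normalCore.relIndex H ≠ 0

/-- The multiplicative group of positive rationals, as a subgroup of ℚˣ. -/
def posRatUnits : Subgroup ℚˣ where
  carrier := {u : ℚˣ | (0 : ℚ) < (u : ℚ)}
  mul_mem' := by
    intro a b ha hb
    have ha' : (0:ℚ) < (a : ℚ) := ha
    have hb' : (0:ℚ) < (b : ℚ) := hb
    show (0:ℚ) < ((a*b : ℚˣ) : ℚ)
    push_cast
    exact mul_pos ha' hb'
  one_mem' := by show (0:ℚ) < ((1:ℚˣ):ℚ); norm_num
  inv_mem' := by
    intro a ha
    have : (0:ℚ) < (a : ℚ) := ha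
    simpa using inv_pos.mpr this

/-- The action of the positive rationals on the (multiplicatively written)
additive group of the rationals, by multiplication. -/
def ratMulAction : posRatUnits →* MulAut (Multiplicative ℚ) where
  toFun u := AddEquiv.toMultiplicative (DistribMulAction.toAddEquiv ℚ (u : ℚˣ))
  map_one' := by ext x; simp [DistribMulAction.toAddEquiv]
  map_mul' := by intro a b; ext x; simp [DistribMulAction.toAddEquiv, mul_smul]

/-- The holomorph-like semidirect product ℚ ⋊ ℚ>0. -/
abbrev HolQ : Type := SemidirectProduct (Multiplicative ℚ) posRatUnits ratMulAction

/-- The copy of the additive rationals inside the semidirect product. -/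
def Asub : Subgroup HolQ := SemidirectProduct.inl.range

open SemidirectProduct Subgroup Multiplicative

lemma mem_Asub {g : HolQ} : g ∈ Asub ↔ g.right = 1 := by
  rw [Asub, SemidirectProduct.range_inl_eq_ker_rightHom, MonoidHom.mem_ker,
    SemidirectProduct.rightHom_eq_right]

lemma inl_mem_Asub (x : Multiplicative ℚ) : (inl x : HolQ) ∈ Asub := ⟨x, rfl⟩

lemma ratMulAction_apply (b : posRatUnits) (x : ℚ) :
    ratMulAction b (ofAdd x) = ofAdd (((b : ℚˣ) : ℚ) * x) := rfl

lemma conj_inl (h : HolQ) (y : Multiplicative ℚ) :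
    h * inl y * h⁻¹ = inl (ratMulAction h.right y) := by
  conv_lhs => rw [← inl_left_mul_inr_right h]
  rw [mul_inv_rev]
  have : ((inl h.left * inr h.right) * inl y * ((inr h.right)⁻¹ * (inl h.left)⁻¹) : HolQ)
      = inl h.left * (inr h.right * inl y * inr h.right⁻¹) * (inl h.left)⁻¹ := by
    rw [map_inv]
    group
  rw [this, ← SemidirectProduct.inl_aut, ← map_inv, ← map_mul, ← map_mul,
    mul_comm h.left, mul_assoc, mul_inv_cancel, mul_one]

lemma comm_mem_Asub (g h : HolQ) : g * h * g⁻¹ * h⁻¹ ∈ Asub := by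
  rw [mem_Asub]
  show g.right * h.right * g.right⁻¹ * h.right⁻¹ = 1
  rw [mul_comm g.right h.right]
  group

lemma Asub_comm {a b : HolQ} (ha : a ∈ Asub) (hb : b ∈ Asub) : a * b = b * a := by
  obtain ⟨x, rfl⟩ := ha
  obtain ⟨y, rfl⟩ := hb
  rw [← map_mul, ← map_mul, mul_comm]

lemma subgroup_of_zpowers {a : Multiplicative ℚ} {K : Subgroup (Multiplicative ℚ)}
    (hK : K ≤ Subgroup.zpowers a) : ∃ b, K = Subgroup.zpowers b := by
  let K' : AddSubgroup ℤ :=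
    { carrier := {n : ℤ | a ^ n ∈ K}
      zero_mem' := by show a ^ (0:ℤ) ∈ K; simpa using one_mem K
      add_mem' := by
        intro m n hm hn
        show a ^ (m + n) ∈ K
        rw [zpow_add]; exact mul_mem hm hn
      neg_mem' := by
        intro n hn
        show a ^ (-n) ∈ K
        rw [zpow_neg]; exact inv_mem hn }
  obtain ⟨c, hc⟩ := Int.subgroup_cyclic K'
  have hcK : a ^ c ∈ K := by
    have : c ∈ K' := hc ▸ AddSubgroup.subset_closure rfl
    exact this
  refine ⟨a ^ c, ?_⟩
  ext x
  constructor
  · intro hx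
    obtain ⟨n, hn⟩ := hK hx
    have hn' : a ^ n = x := hn
    have hnK' : n ∈ K' := by show a ^ n ∈ K; rw [hn']; exact hx
    rw [hc, AddSubgroup.mem_closure_singleton] at hnK'
    obtain ⟨m, hm⟩ := hnK'
    refine ⟨m, ?_⟩
    show (a ^ c) ^ m = x
    rw [← zpow_mul, mul_comm, ← smul_eq_mul, hm, hn']
  · rintro ⟨m, rfl⟩
    exact zpow_mem hcK m

lemma fg_rat_cyclic (K : Subgroup (Multiplicative ℚ)) (hK : K.FG) :
    ∃ b, K = Subgroup.zpowers b := by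
  obtain ⟨S, hS⟩ := hK
  set D : ℕ := ∏ q ∈ S, (toAdd q).den with hDdef
  have hD0 : (D : ℚ) ≠ 0 := by
    rw [hDdef]
    push_cast
    exact Finset.prod_ne_zero_iff.2 fun q _ => Nat.cast_ne_zero.2 (toAdd q).den_nz
  apply subgroup_of_zpowers (a := ofAdd ((D : ℚ)⁻¹))
  rw [← hS, Subgroup.closure_le]
  intro q hq
  rw [SetLike.mem_coe, Subgroup.mem_zpowers_iff]
  have hden : ((toAdd q).den : ℤ) ∣ (D : ℤ) := by
    exact_mod_cast Int.natCast_dvd_natCast.2 (Finset.dvd_prod_of_mem _ hq)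
  have hdenQ : ((toAdd q).den : ℚ) ≠ 0 := Nat.cast_ne_zero.2 (toAdd q).den_nz
  refine ⟨(toAdd q).num * ((D : ℤ) / ((toAdd q).den : ℤ)), ?_⟩
  rw [← ofAdd_zsmul]
  conv_rhs => rw [← ofAdd_toAdd q]
  congr 1
  obtain ⟨m, hm⟩ := hden
  have hden0 : ((toAdd q).den : ℤ) ≠ 0 := by exact_mod_cast (toAdd q).den_nz
  have hmQ : (D : ℚ) = ((toAdd q).den : ℚ) * (m : ℚ) := by exact_mod_cast hm
  have hnum : (toAdd q) * ((toAdd q).den : ℚ) = ((toAdd q).num : ℚ) := by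
    have h := Rat.num_div_den (toAdd q)
    rw [div_eq_iff hdenQ] at h
    exact h.symm
  rw [hm, Int.mul_ediv_cancel_left _ hden0, zsmul_eq_mul]
  push_cast
  rw [mul_inv_eq_iff_eq_mul₀ hD0, hmQ, ← mul_assoc, hnum]

lemma hasFiniteRank_of_le_Asub {H : Subgroup HolQ} (hH : H ≤ Asub) :
    HasFiniteRank H := by
  refine ⟨1, fun K hK => ?_⟩
  let θ : ↥H →* Multiplicative ℚ :=
    { toFun := fun g => (g : HolQ).left
      map_one' := rfl
      map_mul' := by
        intro a b
        show ((a : HolQ) * (b : HolQ)).left = (a : HolQ).left * (b : HolQ).left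
        rw [SemidirectProduct.mul_left, mem_Asub.mp (hH a.2), map_one,
          MulAut.one_apply] }
  have θinj : Function.Injective θ := by
    intro a b hab
    have ha : (a : HolQ).right = 1 := mem_Asub.mp (hH a.2)
    have hb : (b : HolQ).right = 1 := mem_Asub.mp (hH b.2)
    apply Subtype.ext
    ext
    · exact hab
    · rw [ha, hb]
  have hmap : (K.map θ).FG := by
    obtain ⟨S, hS⟩ := hK
    exact ⟨S.image θ, by rw [Finset.coe_image, ← MonoidHom.map_closure, hS]⟩
  obtain ⟨b, hb⟩ := fg_rat_cyclic _ hmap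
  have hbmem : b ∈ K.map θ := hb ▸ Subgroup.mem_zpowers b
  obtain ⟨g, hgK, hgb⟩ := hbmem
  refine ⟨{g}, by simp, ?_⟩
  apply Subgroup.map_injective θinj
  rw [MonoidHom.map_closure]
  rw [show (θ '' (({g} : Finset ↥H) : Set ↥H)) = {b} by simp [hgb]]
  rw [← Subgroup.zpowers_eq_closure, ← hb]

lemma pow_relindex_mem {H N : Subgroup HolQ} (hH : H ≤ Asub) {g : HolQ}
    (hg : g ∈ H) : g ^ (N.subgroupOf H).index ∈ N := by
  haveI : (N.subgroupOf H).Normal := by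
    constructor
    intro n hn x
    have hx : (x : HolQ) * (n : HolQ) * (x : HolQ)⁻¹ = (n : HolQ) := by
      rw [Asub_comm (hH x.2) (hH n.2), mul_assoc, mul_inv_cancel, mul_one]
    rw [Subgroup.mem_subgroupOf] at hn ⊢
    show ((x * n * x⁻¹ : ↥H) : HolQ) ∈ N
    rw [show ((x * n * x⁻¹ : ↥H) : HolQ) = (x : HolQ) * (n : HolQ) * (x : HolQ)⁻¹ from rfl,
      hx]
    exact hn
  have := Subgroup.pow_index_mem (N.subgroupOf H) (⟨g, hg⟩ : ↥H)
  rw [Subgroup.mem_subgroupOf] at this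
  simpa using this

lemma Asub_le_of_mem {N : Subgroup HolQ} (hN : N.Normal) {s : ℚ} (hs : s ≠ 0)
    (hmem : (inl (ofAdd s) : HolQ) ∈ N) : Asub ≤ N := by
  rintro g ⟨y, rfl⟩
  rcases eq_or_ne (toAdd y) 0 with h0 | h0
  · have : y = 1 := by
      rw [← ofAdd_toAdd y, h0]; rfl
    rw [this, map_one]
    exact one_mem N
  · set r := toAdd y with hr
    set s' : ℚ := if 0 < r / s then s else -s with hs'
    have hmem' : (inl (ofAdd s') : HolQ) ∈ N := by
      rw [hs']
      split
      · exact hmem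
      · have : (inl (ofAdd (-s)) : HolQ) = (inl (ofAdd s) : HolQ)⁻¹ := by
          rw [← map_inv, ← ofAdd_neg]
        rw [this]
        exact inv_mem hmem
    have hpos : 0 < r / s' := by
      rw [hs']
      split
      · assumption
      · rename_i h
        rw [div_neg]
        rcases (div_ne_zero h0 hs).lt_or_gt with h' | h'
        · linarith
        · exact absurd h' h
    have hs0' : s' ≠ 0 := by
      rw [hs']; split <;> simp [hs]
    set u : ℚˣ := Units.mk0 (r / s') (ne_of_gt hpos) with hu
    have hu' : u ∈ posRatUnits := hpos
    set b : ↥posRatUnits := ⟨u, hu'⟩ with hb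
    have := hN.conj_mem _ hmem' (inr b)
    rw [← map_inv, ← SemidirectProduct.inl_aut] at this
    have heq : ratMulAction b (ofAdd s') = ofAdd r := by
      rw [ratMulAction_apply]
      congr 1
      show (r / s') * s' = r
      exact div_mul_cancel₀ r hs0'
    rwa [heq] at this

lemma Asub_le_of_subnormal {H : Subgroup HolQ} (hsn : _root_.IsSubnormal H)
    (hnle : ¬ H ≤ Asub) : Asub ≤ H := by
  obtain ⟨n, c, h0, hn, hc⟩ := hsn
  suffices key : ∀ j i, i + j = n → ¬ c i ≤ Asub → Asub ≤ c i by
    have := key n 0 (by omega) (by rwa [h0])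
    rwa [h0] at this
  intro j
  induction j with
  | zero =>
    intro i hi _
    have : i = n := by omega
    rw [this, hn]
    exact le_top
  | succ j ih =>
    intro i hi hile
    have hlt : i < n := by omega
    obtain ⟨hle, hnorm⟩ := hc i hlt
    have h1le : ¬ c (i + 1) ≤ Asub := fun h => hile (hle.trans h)
    have hA1 : Asub ≤ c (i + 1) := ih (i + 1) (show i + 1 + j = n by omega) h1le
    obtain ⟨h, hhc, hhA⟩ : ∃ h ∈ c i, h ∉ Asub := by
      by_contra hcon
      push_neg at hcon
      exact hile hcon
    rintro g ⟨y, rfl⟩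
    set r := toAdd y with hr
    have hb1 : ((h.right : ℚˣ) : ℚ) ≠ 1 := by
      intro hcon
      apply hhA
      rw [mem_Asub]
      ext
      exact hcon
    have hsub : (1 : ℚ) - ((h.right : ℚˣ) : ℚ) ≠ 0 := sub_ne_zero.mpr fun e => hb1 e.symm
    set x : ℚ := r / (1 - ((h.right : ℚˣ) : ℚ)) with hx
    set z : HolQ := inl (ofAdd x) with hz
    have hzA : z ∈ Asub := inl_mem_Asub _
    have hz1 : z ∈ c (i + 1) := hA1 hzA
    have hh1 : h ∈ c (i + 1) := hle hhc
    have hconj : z * h * z⁻¹ ∈ c i := by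
      have := hnorm.conj_mem (⟨h, hh1⟩ : ↥(c (i+1)))
        (Subgroup.mem_subgroupOf.mpr hhc) (⟨z, hz1⟩ : ↥(c (i+1)))
      rw [Subgroup.mem_subgroupOf] at this
      exact this
    have hcommmem : z * h * z⁻¹ * h⁻¹ ∈ c i := mul_mem hconj (inv_mem hhc)
    have e2 : h * z⁻¹ * h⁻¹ = inl (ofAdd (-(((h.right : ℚˣ) : ℚ) * x))) := by
      rw [hz, ← map_inv, ← ofAdd_neg, conj_inl, ratMulAction_apply]
      congr 2
      ring
    have hcommeq : z * h * z⁻¹ * h⁻¹ = inl (ofAdd (x - ((h.right : ℚˣ) : ℚ) * x)) := by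
      calc z * h * z⁻¹ * h⁻¹ = z * (h * z⁻¹ * h⁻¹) := by group
        _ = inl (ofAdd x) * inl (ofAdd (-(((h.right : ℚˣ) : ℚ) * x))) := by rw [e2, hz]
        _ = inl (ofAdd (x - ((h.right : ℚˣ) : ℚ) * x)) := by
            rw [← map_mul, ← ofAdd_add, ← sub_eq_add_neg]
    have hxval : x - ((h.right : ℚˣ) : ℚ) * x = r := by
      rw [hx]
      field_simp
    rw [hcommeq, hxval] at hcommmem
    rwa [← ofAdd_toAdd y, ← hr]

lemma normal_of_Asub_le {H : Subgroup HolQ} (hA : Asub ≤ H) : H.Normal := by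
  constructor
  intro h hh g
  have : g * h * g⁻¹ = (g * h * g⁻¹ * h⁻¹) * h := by group
  rw [this]
  exact mul_mem (hA (comm_mem_Asub g h)) hh

theorem holomorph_example :
    (∀ H : Subgroup HolQ, H ≤ Asub → H ≠ ⊥ → H ≠ Asub → ¬ IsCN H) ∧
    (∀ H : Subgroup HolQ, _root_.IsSubnormal H → ¬ HasFiniteRank H → H.Normal) ∧
    (∀ H : Subgroup HolQ, _root_.IsSubnormal H → ¬ H ≤ Asub → H.Normal) := by
  refine ⟨?_, ?_, ?_⟩
  · intro H hHA hbot hne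
    rintro ⟨N, hN, hc1, hc2⟩
    obtain ⟨g, hgH, hg1⟩ :=
      ((Subgroup.nontrivial_iff_exists_ne_one H).mp
        ((Subgroup.nontrivial_iff_ne_bot H).mpr hbot))
    obtain ⟨y, rfl⟩ := hHA hgH
    have hy0 : toAdd y ≠ 0 := by
      intro hcon
      apply hg1
      rw [← ofAdd_toAdd y, hcon, ofAdd_zero, map_one]
    set k := (N.subgroupOf H).index with hk
    have hk0 : k ≠ 0 := hc2
    have hpow : (inl y : HolQ) ^ k ∈ N := pow_relindex_mem hHA hgH
    have hpow' : (inl y : HolQ) ^ k = inl (ofAdd ((k : ℚ) * toAdd y)) := by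
      rw [← map_pow]
      congr 1
    rw [hpow'] at hpow
    have hs0 : (k : ℚ) * toAdd y ≠ 0 :=
      mul_ne_zero (Nat.cast_ne_zero.2 hk0) hy0
    have hAN : Asub ≤ N := Asub_le_of_mem hN hs0 hpow
    have hrel := Subgroup.relIndex_mul_relIndex H Asub N hHA hAN
    have hm0 : H.relIndex Asub ≠ 0 := fun h => hc1 (by rw [← hrel, h, zero_mul])
    have hAH : Asub ≤ H := by
      rintro g' ⟨y', rfl⟩
      set m := (H.subgroupOf Asub).index with hm
      have hm0' : m ≠ 0 := hm0
      have hpow2 : (inl (ofAdd (toAdd y' / (m : ℚ))) : HolQ) ^ m ∈ H :=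
        pow_relindex_mem (le_refl Asub) (inl_mem_Asub _)
      have heq : (inl (ofAdd (toAdd y' / (m : ℚ))) : HolQ) ^ m = inl y' := by
        rw [← map_pow]
        congr 1
        rw [← ofAdd_nsmul]
        conv_rhs => rw [← ofAdd_toAdd y']
        congr 1
        rw [nsmul_eq_mul]
        exact mul_div_cancel₀ _ (Nat.cast_ne_zero.2 hm0')
      rwa [heq] at hpow2
    exact hne (le_antisymm hHA hAH)
  · intro H hsn hfr
    by_cases hle : H ≤ Asub
    · exact absurd (hasFiniteRank_of_le_Asub hle) hfr
    · exact normal_of_Asub_le (Asub_le_of_subnormal hsn hle)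
  · intro H hsn hle
    exact normal_of_Asub_le (Asub_le_of_subnormal hsn hle)
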